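/- Let A be any linearly ordered set with at least 5 elements. Then there exist infinitely many non-equivalent monotone games over A; that is, there is a sequence H_0, H_1, H_2, … of monotone games over A such that for all m ≠ n, H_m is not equivalent to H_n. -/

import Mathlib

universe u

namespace SetTheory

/-- Pre-games (as in the older Mathlib's `SetTheory.PGame`, since removed from Mathlib). -/
inductive PGame : Type (u + 1)
  | mk : ∀ α β : Type u, (α → PGame) → (β → PGame) → PGame

/-- The pre-game `0 = { | }`, as in the older Mathlib. -/
instance PGame.instZero : Zero PGame :=
  ⟨⟨PEmpty, PEmpty, PEmpty.elim, PEmpty.elim⟩⟩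

end SetTheory

/-- Combinatorial games over a poset `A` of atoms: either an atomic game `[a]` for an atom
`a : A`, or a composite game `⟨L|R⟩` where `L` and `R` are nonempty families of games
(the left and right options). -/
inductive PoGame (A : Type u) : Type (u + 1) where
  | atom : A → PoGame A
  | mk : (xl xr : Type u) → (xl → PoGame A) → (xr → PoGame A) →
      Nonempty xl → Nonempty xr → PoGame A

namespace PoGame

variable {A : Type u}

/-- `G` is an atomic game. -/
def IsAtomic : PoGame A → Prop
  | atom _ => True
  | mk _ _ _ _ _ _ => False

/-- `G` is a left option of the game given as second argument. -/
def IsLeftOption (G : PoGame A) : PoGame A → Prop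
  | atom _ => False
  | mk _ _ L _ _ _ => ∃ i, L i = G

/-- `G` is a right option of the game given as second argument. -/
def IsRightOption (G : PoGame A) : PoGame A → Prop
  | atom _ => False
  | mk _ _ _ R _ _ => ∃ j, R j = G

section Order

variable [PartialOrder A]

mutual
  /-- `Le G H` is the relation `G ≤ H` on games over the poset `A`, defined by mutual
  recursion with `Lf` (the relation `G ⊲ H`): `G ≤ H` iff every left option `G^L`
  satisfies `G^L ⊲ H`, every right option `H^R` satisfies `G ⊲ H^R`, and if `G` or `H`
  is atomic then `G ⊲ H`. -/
  inductive Le : PoGame A → PoGame A → Prop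
    | intro (G H : PoGame A)
        (hL : ∀ G', IsLeftOption G' G → Lf G' H)
        (hR : ∀ H', IsRightOption H' H → Lf G H')
        (hA : IsAtomic G ∨ IsAtomic H → Lf G H) : Le G H

  /-- `Lf G H` is the relation `G ⊲ H` on games over the poset `A`: it holds iff some
  right option `G^R` satisfies `G^R ≤ H`, or some left option `H^L` satisfies `G ≤ H^L`,
  or `G = [a]` and `H = [b]` are atomic with `a ≤ b` in `A`. -/
  inductive Lf : PoGame A → PoGame A → Prop
    | rightOption (G H G' : PoGame A) (h : IsRightOption G' G) (hle : Le G' H) : Lf G H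
    | leftOption (G H H' : PoGame A) (h : IsLeftOption H' H) (hle : Le G H') : Lf G H
    | atom (a b : A) (hab : a ≤ b) : Lf (atom a) (atom b)
end

/-- Two games are equivalent if `G ≤ H` and `H ≤ G`. -/
def GEquiv (G H : PoGame A) : Prop := Le G H ∧ Le H G

/-- `G` is locally monotone if `G ≤ G^L` for every left option `G^L` and `G^R ≤ G` for
every right option `G^R`. -/
def LocallyMonotone (G : PoGame A) : Prop :=
  (∀ G', IsLeftOption G' G → Le G G') ∧ (∀ G', IsRightOption G' G → Le G' G)

/-- `G` is an option (left or right) of `H`. -/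
def IsOption (G H : PoGame A) : Prop := IsLeftOption G H ∨ IsRightOption G H

/-- `G` is a position of `H`: `H` itself, an option of `H`, an option of an option, etc. -/
def IsPosition (G H : PoGame A) : Prop := Relation.ReflTransGen IsOption G H

/-- `G` is monotone if every position of `G` is locally monotone. -/
def Monotone (G : PoGame A) : Prop := ∀ K, IsPosition K G → LocallyMonotone K

end Order

/-- The 5-element linearly ordered set `L5 = {-3, -2, -1, 0, 1}`. -/
abbrev L5 : Type := {a : ℤ // -3 ≤ a ∧ a ≤ 1}

/-- `G` has mean `C`: an atomic game `[a]` has mean `a`, and a composite game has mean `C`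
iff every left option has mean `C + 1` and every right option has mean `C - 1`. -/
def HasMean : PoGame L5 → ℤ → Prop
  | atom a, C => (a : ℤ) = C
  | mk _ _ L R _ _, C => (∀ i, HasMean (L i) (C + 1)) ∧ (∀ j, HasMean (R j) (C - 1))

/-- The game `⟨G | H⟩` with a single left option `G` and a single right option `H`. -/
def ofPair (G H : PoGame A) : PoGame A :=
  mk PUnit PUnit (fun _ => G) (fun _ => H) ⟨PUnit.unit⟩ ⟨PUnit.unit⟩

/-- `⋆ = ⟨-1 | -3⟩`. -/
def star : PoGame L5 := ofPair (atom ⟨-1, by norm_num⟩) (atom ⟨-3, by norm_num⟩)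

/-- `M(G) = ⟨1 | G⟩`. -/
def M (G : PoGame L5) : PoGame L5 := ofPair (atom ⟨1, by norm_num⟩) G

/-- `P(G) = ⟨G | -2⟩`. -/
def P (G : PoGame L5) : PoGame L5 := ofPair G (atom ⟨-2, by norm_num⟩)

/-- `P⋆(G) = ⟨G | ⋆⟩`. -/
def Pstar (G : PoGame L5) : PoGame L5 := ofPair G star

/-- `Pn n G = P G` if `n` is odd, `P⋆ G` if `n` is even. -/
def Pn (n : ℕ) (G : PoGame L5) : PoGame L5 := if Odd n then P G else Pstar G

/-- The sequence `G_0 = [0]`, `G_{n+1} = M (Pn n (G_n))`. -/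
def Gseq : ℕ → PoGame L5
  | 0 => atom ⟨0, by norm_num⟩
  | n + 1 => M (Pn n (Gseq n))

/-- The normal-play game obtained from a game over `L5` by replacing every atom by the
normal-play game `0 = { | }`, keeping the tree of left and right options. -/
def np : PoGame L5 → SetTheory.PGame.{0}
  | atom _ => 0
  | mk xl xr L R _ _ => SetTheory.PGame.mk xl xr (fun i => np (L i)) (fun j => np (R j))

end PoGame

namespace Stmt16Aux
open PoGame

set_option linter.unusedSectionVars false

variable {A : Type u} [PartialOrder A]

theorem le_iff {G H : PoGame A} : Le G H ↔
    (∀ G', IsLeftOption G' G → Lf G' H) ∧ (∀ H', IsRightOption H' H → Lf G H') ∧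
    (IsAtomic G ∨ IsAtomic H → Lf G H) := by
  constructor
  · rintro ⟨_, _, hL, hR, hA⟩; exact ⟨hL, hR, hA⟩
  · rintro ⟨hL, hR, hA⟩; exact .intro _ _ hL hR hA

theorem lf_iff {G H : PoGame A} : Lf G H ↔
    (∃ G', IsRightOption G' G ∧ Le G' H) ∨ (∃ H', IsLeftOption H' H ∧ Le G H') ∨
    (∃ a b, G = atom a ∧ H = atom b ∧ a ≤ b) := by
  constructor
  · rintro (⟨_, _, G', h, hle⟩ | ⟨_, _, H', h, hle⟩ | ⟨a, b, hab⟩)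
    · exact Or.inl ⟨G', h, hle⟩
    · exact Or.inr (Or.inl ⟨H', h, hle⟩)
    · exact Or.inr (Or.inr ⟨a, b, rfl, rfl, hab⟩)
  · rintro (⟨G', h, hle⟩ | ⟨H', h, hle⟩ | ⟨a, b, rfl, rfl, hab⟩)
    · exact .rightOption _ _ _ h hle
    · exact .leftOption _ _ _ h hle
    · exact .atom a b hab

@[simp] theorem isLeftOption_atom {K : PoGame A} {a : A} : IsLeftOption K (atom a) ↔ False :=
  Iff.rfl
@[simp] theorem isRightOption_atom {K : PoGame A} {a : A} : IsRightOption K (atom a) ↔ False :=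
  Iff.rfl
@[simp] theorem isLeftOption_ofPair {K G H : PoGame A} :
    IsLeftOption K (ofPair G H) ↔ K = G := by
  simp [IsLeftOption, ofPair, eq_comm]
@[simp] theorem isRightOption_ofPair {K G H : PoGame A} :
    IsRightOption K (ofPair G H) ↔ K = H := by
  simp [IsRightOption, ofPair, eq_comm]
@[simp] theorem isAtomic_atom {a : A} : IsAtomic (atom a : PoGame A) ↔ True := Iff.rfl
@[simp] theorem isAtomic_ofPair {G H : PoGame A} : IsAtomic (ofPair G H) ↔ False := Iff.rfl
@[simp] theorem ofPair_ne_atom {G H : PoGame A} {a : A} : ofPair G H = atom a ↔ False := by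
  simp [ofPair]
@[simp] theorem atom_ne_ofPair {G H : PoGame A} {a : A} : atom a = ofPair G H ↔ False := by
  simp [ofPair]

theorem lf_atom_atom {a b : A} : Lf (atom a) (atom b) ↔ a ≤ b := by
  rw [lf_iff]; simp [PoGame.atom.injEq]

theorem le_atom_atom {a b : A} : Le (atom a) (atom b) ↔ a ≤ b := by
  rw [le_iff]; simp [lf_atom_atom]

theorem lf_ofPair_atom {x y : PoGame A} {b : A} : Lf (ofPair x y) (atom b) ↔ Le y (atom b) := by
  rw [lf_iff]; simp

theorem lf_atom_ofPair {a : A} {z w : PoGame A} :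
    Lf (atom a) (ofPair z w) ↔ Le (atom a) z := by
  rw [lf_iff]; simp

theorem lf_ofPair_ofPair {x y z w : PoGame A} :
    Lf (ofPair x y) (ofPair z w) ↔ Le y (ofPair z w) ∨ Le (ofPair x y) z := by
  rw [lf_iff]; simp

theorem le_atom_ofPair {a : A} {z w : PoGame A} :
    Le (atom a) (ofPair z w) ↔ Lf (atom a) w ∧ Le (atom a) z := by
  rw [le_iff]
  constructor
  · rintro ⟨-, hR, hA⟩
    exact ⟨hR w (by simp), (lf_atom_ofPair).1 (hA (Or.inl trivial))⟩
  · rintro ⟨h1, h2⟩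
    refine ⟨by simp, ?_, fun _ => (lf_atom_ofPair).2 h2⟩
    intro H' hH'; rw [isRightOption_ofPair.1 hH']; exact h1

theorem le_ofPair_atom {x y : PoGame A} {b : A} :
    Le (ofPair x y) (atom b) ↔ Lf x (atom b) ∧ Le y (atom b) := by
  rw [le_iff]
  constructor
  · rintro ⟨hL, -, hA⟩
    exact ⟨hL x (by simp), (lf_ofPair_atom).1 (hA (Or.inr trivial))⟩
  · rintro ⟨h1, h2⟩
    refine ⟨?_, by simp, fun _ => (lf_ofPair_atom).2 h2⟩
    intro G' hG'; rw [isLeftOption_ofPair.1 hG']; exact h1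

theorem le_ofPair_ofPair {x y z w : PoGame A} :
    Le (ofPair x y) (ofPair z w) ↔ Lf x (ofPair z w) ∧ Lf (ofPair x y) w := by
  rw [le_iff]
  constructor
  · rintro ⟨hL, hR, -⟩
    exact ⟨hL x (by simp), hR w (by simp)⟩
  · rintro ⟨h1, h2⟩
    refine ⟨?_, ?_, by simp⟩
    · intro G' hG'; rw [isLeftOption_ofPair.1 hG']; exact h1
    · intro H' hH'; rw [isRightOption_ofPair.1 hH']; exact h2

theorem lf_of_le_left {K z w : PoGame A} (h : Le K z) : Lf K (ofPair z w) :=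
  .leftOption _ _ z (by simp) h

theorem lf_of_right_le {z w K : PoGame A} (h : Le w K) : Lf (ofPair z w) K :=
  .rightOption _ _ w (by simp) h

/-! Monotone-building lemmas -/

theorem monotone_build {G : PoGame A} (h1 : LocallyMonotone G)
    (h2 : ∀ K, IsOption K G → PoGame.Monotone K) : PoGame.Monotone G := by
  intro K hK
  rcases Relation.ReflTransGen.cases_tail hK with rfl | ⟨c, hKc, hcG⟩
  · exact h1
  · exact h2 c hcG K hKc

theorem monotone_atom {a : A} : PoGame.Monotone (atom a : PoGame A) := by
  refine monotone_build ⟨?_, ?_⟩ ?_ <;> simp [IsOption]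

theorem monotone_ofPair {G H : PoGame A} (hG : PoGame.Monotone G) (hH : PoGame.Monotone H)
    (h1 : Le (ofPair G H) G) (h2 : Le H (ofPair G H)) : PoGame.Monotone (ofPair G H) := by
  refine monotone_build ⟨?_, ?_⟩ ?_
  · intro G' hG'; rw [isLeftOption_ofPair.1 hG']; exact h1
  · intro H' hH'; rw [isRightOption_ofPair.1 hH']; exact h2
  · intro K hK
    rcases hK with hK | hK
    · rw [isLeftOption_ofPair.1 hK]; exact hG
    · rw [isRightOption_ofPair.1 hK]; exact hH


/-! ### The chain of games -/

section Chain

variable (v : Fin 5 → A)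

/-- The star game `⟨v 2 | v 0⟩`. -/
def stz : PoGame A := ofPair (atom (v 2)) (atom (v 0))

/-- Alternating right option. -/
def zed (n : ℕ) : PoGame A := if Odd n then atom (v 1) else stz v

/-- The chain of games. -/
def GG : ℕ → PoGame A
  | 0 => atom (v 3)
  | n + 1 => ofPair (atom (v 4)) (ofPair (GG n) (zed v n))

/-- Auxiliary game. -/
def XX (n : ℕ) : PoGame A := ofPair (GG v n) (zed v n)

theorem GG_zero : GG v 0 = atom (v 3) := rfl
theorem GG_succ (n : ℕ) : GG v (n + 1) = ofPair (atom (v 4)) (XX v n) := rfl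
theorem XX_def (n : ℕ) : XX v n = ofPair (GG v n) (zed v n) := rfl
theorem stz_def : stz v = ofPair (atom (v 2)) (atom (v 0)) := rfl
theorem zed_odd {n : ℕ} (hn : Odd n) : zed v n = atom (v 1) := if_pos hn
theorem zed_even {n : ℕ} (hn : ¬ Odd n) : zed v n = stz v := if_neg hn

variable (hv : StrictMono v)

theorem vle (hv : StrictMono v) {i j : Fin 5} (h : i ≤ j) : v i ≤ v j := hv.monotone h

include hv

theorem le_zed_top (n : ℕ) : Le (zed v n) (atom (v 4)) := by
  by_cases hn : Odd n
  · rw [zed_odd v hn]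
    exact le_atom_atom.2 (vle v hv (by decide))
  · rw [zed_even v hn, stz_def, le_ofPair_atom]
    exact ⟨lf_atom_atom.2 (vle v hv (by decide)), le_atom_atom.2 (vle v hv (by decide))⟩

theorem lf_G_top (n : ℕ) : Lf (GG v n) (atom (v 4)) := by
  induction n with
  | zero => exact lf_atom_atom.2 (vle v hv (by decide))
  | succ n ih =>
    rw [GG_succ, lf_ofPair_atom, XX_def, le_ofPair_atom]
    exact ⟨ih, le_zed_top v hv n⟩

theorem le_X_top (n : ℕ) : Le (XX v n) (atom (v 4)) := by
  rw [XX_def, le_ofPair_atom]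
  exact ⟨lf_G_top v hv n, le_zed_top v hv n⟩

theorem le_G_top (n : ℕ) : Le (GG v n) (atom (v 4)) := by
  cases n with
  | zero => exact le_atom_atom.2 (vle v hv (by decide))
  | succ n =>
    rw [GG_succ, le_ofPair_atom]
    exact ⟨lf_atom_atom.2 le_rfl, le_X_top v hv n⟩

theorem le_v1_G (n : ℕ) : Le (atom (v 1)) (GG v n) := by
  induction n with
  | zero => exact le_atom_atom.2 (vle v hv (by decide))
  | succ n ih =>
    rw [GG_succ, le_atom_ofPair]
    refine ⟨?_, le_atom_atom.2 (vle v hv (by decide))⟩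
    rw [XX_def, lf_atom_ofPair]
    exact ih

theorem le_v2_G (n : ℕ) : Le (atom (v 2)) (GG v n) := by
  induction n with
  | zero => exact le_atom_atom.2 (vle v hv (by decide))
  | succ n ih =>
    rw [GG_succ, le_atom_ofPair]
    refine ⟨?_, le_atom_atom.2 (vle v hv (by decide))⟩
    rw [XX_def, lf_atom_ofPair]
    exact ih

theorem le_stz_v2 : Le (stz v) (atom (v 2)) := by
  rw [stz_def, le_ofPair_atom]
  exact ⟨lf_atom_atom.2 le_rfl, le_atom_atom.2 (vle v hv (by decide))⟩

theorem le_v0_stz : Le (atom (v 0)) (stz v) := by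
  rw [stz_def, le_atom_ofPair, lf_atom_atom]
  exact ⟨vle v hv (by decide), le_atom_atom.2 (vle v hv (by decide))⟩

theorem le_zed_succ_X (n : ℕ) : Le (zed v (n + 1)) (XX v n) := by
  rcases Nat.even_or_odd n with he | ho
  · have h1 : ¬ Odd n := Nat.not_odd_iff_even.mpr he
    rw [zed_odd v (Even.add_one he), XX_def, zed_even v h1, le_atom_ofPair]
    refine ⟨?_, le_v1_G v hv n⟩
    rw [stz_def, lf_atom_ofPair]
    exact le_atom_atom.2 (vle v hv (by decide))
  · have h1 : ¬ Odd (n + 1) := Nat.not_odd_iff_even.mpr (Odd.add_one ho)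
    rw [zed_even v h1, XX_def, zed_odd v ho, stz_def, le_ofPair_ofPair]
    constructor
    · rw [lf_atom_ofPair]
      exact le_v2_G v hv n
    · rw [lf_ofPair_atom]
      exact le_atom_atom.2 (vle v hv (by decide))

theorem le_X_G (n : ℕ) : Le (XX v n) (GG v n) := by
  cases n with
  | zero =>
    have h0 : ¬ Odd 0 := by decide
    rw [XX_def, GG_zero, zed_even v h0, le_ofPair_atom]
    constructor
    · exact lf_atom_atom.2 le_rfl
    · rw [stz_def, le_ofPair_atom]
      exact ⟨lf_atom_atom.2 (vle v hv (by decide)), le_atom_atom.2 (vle v hv (by decide))⟩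
  | succ n =>
    rw [show XX v (n + 1) = ofPair (GG v (n + 1)) (zed v (n + 1)) from rfl,
      show GG v (n + 1) = ofPair (atom (v 4)) (XX v n) from rfl, le_ofPair_ofPair]
    constructor
    · exact lf_of_le_left (le_G_top v hv (n + 1))
    · exact lf_of_right_le (le_zed_succ_X v hv n)

theorem le_zed_X (n : ℕ) : Le (zed v n) (XX v n) := by
  by_cases hn : Odd n
  · rw [zed_odd v hn, XX_def, zed_odd v hn, le_atom_ofPair, lf_atom_atom]
    exact ⟨le_rfl, le_v1_G v hv n⟩
  · rw [zed_even v hn, XX_def, zed_even v hn]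
    rw [show stz v = ofPair (atom (v 2)) (atom (v 0)) from rfl, le_ofPair_ofPair]
    constructor
    · rw [lf_atom_ofPair]; exact le_v2_G v hv n
    · exact lf_of_le_left (le_stz_v2 v hv)

theorem le_X_Gsucc (n : ℕ) : Le (XX v n) (GG v (n + 1)) := by
  rw [GG_succ, XX_def, le_ofPair_ofPair]
  constructor
  · exact lf_of_le_left (le_G_top v hv n)
  · exact lf_of_le_left (le_X_G v hv n)

theorem mono_stz : PoGame.Monotone (stz v) := by
  rw [stz_def]
  exact monotone_ofPair monotone_atom monotone_atom
    (stz_def v ▸ le_stz_v2 v hv) (stz_def v ▸ le_v0_stz v hv)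

theorem mono_zed (n : ℕ) : PoGame.Monotone (zed v n) := by
  by_cases hn : Odd n
  · rw [zed_odd v hn]; exact monotone_atom
  · rw [zed_even v hn]; exact mono_stz v hv

theorem mono_G (n : ℕ) : PoGame.Monotone (GG v n) := by
  induction n with
  | zero => exact monotone_atom
  | succ n ih =>
    have monoX : PoGame.Monotone (XX v n) := by
      rw [XX_def]
      exact monotone_ofPair ih (mono_zed v hv n)
        (XX_def v n ▸ le_X_G v hv n) (XX_def v n ▸ le_zed_X v hv n)
    rw [GG_succ]
    exact monotone_ofPair monotone_atom monoX
      (GG_succ v n ▸ le_G_top v hv (n + 1)) (GG_succ v n ▸ le_X_Gsucc v hv n)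

/-! ### Negative results: the chain is strict -/

theorem not_le_stz_v1 : ¬ Le (stz v) (atom (v 1)) := by
  rw [stz_def, le_ofPair_atom, lf_atom_atom]
  rintro ⟨h, -⟩
  exact (show v 1 < v 2 from hv (show (1 : Fin 5) < 2 by decide)).not_ge h

theorem not_le_v1_stz : ¬ Le (atom (v 1)) (stz v) := by
  rw [stz_def, le_atom_ofPair, lf_atom_atom]
  rintro ⟨h, -⟩
  exact (show v 0 < v 1 from hv (show (0 : Fin 5) < 1 by decide)).not_ge h

theorem not_lf_G_v2 (n : ℕ) : ¬ Lf (GG v n) (atom (v 2)) := by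
  induction n with
  | zero =>
    rw [GG_zero, lf_atom_atom]
    exact (show v 2 < v 3 from hv (show (2 : Fin 5) < 3 by decide)).not_ge
  | succ n ih =>
    rw [GG_succ, lf_ofPair_atom, XX_def, le_ofPair_atom]
    rintro ⟨h, -⟩
    exact ih h

theorem N1_of (n : ℕ) (H : ∀ j, j < n → ∀ i, i < j → ¬ Le (XX v j) (XX v i)) :
    ∀ m, m < n → ¬ Le (GG v n) (GG v m) := by
  intro m
  induction m using Nat.strong_induction_on with
  | _ m IHm =>
    intro hmn hle
    obtain ⟨p, rfl⟩ : ∃ p, n = p + 1 := ⟨n - 1, by omega⟩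
    cases m with
    | zero =>
      rw [GG_succ, GG_zero, le_ofPair_atom, lf_atom_atom] at hle
      exact (show v 3 < v 4 from hv (show (3 : Fin 5) < 4 by decide)).not_ge hle.1
    | succ k =>
      rw [GG_succ, GG_succ, le_ofPair_ofPair] at hle
      have h2 : Le (XX v p) (XX v k) ∨ Le (GG v (p + 1)) (GG v k) :=
        lf_ofPair_ofPair.1 hle.2
      rcases h2 with h | h
      · exact H p (by omega) k (by omega) h
      · exact IHm k (by omega) (by omega) h

theorem keyX : ∀ n k, k < n → ¬ Le (XX v n) (XX v k) := by
  intro n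
  induction n using Nat.strong_induction_on with
  | _ n IH =>
    have HN1 : ∀ m, m < n → ¬ Le (GG v n) (GG v m) :=
      N1_of v hv n (fun j hj => IH j hj)
    intro k hk hle
    rw [XX_def, XX_def, le_ofPair_ofPair] at hle
    obtain ⟨h1, h2⟩ := hle
    by_cases hkn : k + 1 = n
    · -- adjacent case: parity argument
      subst hkn
      rcases Nat.even_or_odd k with he | ho
      · have hk1 : ¬ Odd k := Nat.not_odd_iff_even.mpr he
        rw [zed_odd v (Even.add_one he), zed_even v hk1, stz_def,
          lf_ofPair_ofPair] at h2
        rcases h2 with h2 | h2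
        · exact not_le_v1_stz v hv (stz_def v ▸ h2)
        · rw [le_ofPair_atom] at h2
          exact not_lf_G_v2 v hv (k + 1) h2.1
      · have hk1 : ¬ Odd (k + 1) := Nat.not_odd_iff_even.mpr (Odd.add_one ho)
        rw [zed_even v hk1, zed_odd v ho, lf_ofPair_atom] at h2
        exact not_le_stz_v1 v hv h2
    · -- distant case
      obtain ⟨p, rfl⟩ : ∃ p, n = p + 1 := ⟨n - 1, by omega⟩
      rw [GG_succ, lf_ofPair_ofPair] at h1
      rcases h1 with h | h
      · exact IH p (by omega) k (by omega) h
      · exact HN1 k (by omega) h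

theorem keyG (n m : ℕ) (h : m < n) : ¬ Le (GG v n) (GG v m) :=
  N1_of v hv n (fun j _ => keyX v hv j) m h

end Chain

end Stmt16Aux

open PoGame in
/-- For any linearly ordered set `A` with at least 5 elements, there exist infinitely many
non-equivalent monotone games over `A`. -/
theorem stmt_16 (A : Type u) [LinearOrder A] (f : Fin 5 → A) (hf : Function.Injective f) :
    ∃ H : ℕ → PoGame A, (∀ n, PoGame.Monotone (H n)) ∧
      ∀ m n : ℕ, m ≠ n → ¬ GEquiv (H m) (H n) := by
  classical
  have hcard : (Finset.univ.image f).card = 5 := by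
    rw [Finset.card_image_of_injective _ hf, Finset.card_univ, Fintype.card_fin]
  set e := (Finset.univ.image f).orderEmbOfFin hcard with he
  have hv : StrictMono (fun i : Fin 5 => e i) := e.strictMono
  refine ⟨fun n => Stmt16Aux.GG (fun i => e i) n,
    fun n => Stmt16Aux.mono_G _ hv n, ?_⟩
  intro m n hmn h
  rcases hmn.lt_or_gt with hlt | hlt
  · exact Stmt16Aux.keyG _ hv n m hlt h.2
  · exact Stmt16Aux.keyG _ hv m n hlt h.1
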